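/- arXiv:1704.02131 — 4 statements merged into one kernel-verified Lean document; each statement's English description precedes it below -/
import Mathlib

section
/- Let (X, ⟨·,·⟩) be a real Hilbert space and J : X → ℝ a functional with J(0) = 0 which is sequentially weakly upper semicontinuous (whenever a sequence (xₙ) converges weakly to x in X, one has limsup J(xₙ) ≤ J(x)) and Gâteaux differentiable, in the sense that there is a map J' : X → X such that for all x, v ∈ X the function t ↦ J(x + t·v) is differentiable at t = 0 with derivative ⟨J'(x), v⟩. Assume that for some r > 0 there exists x̂ ∈ X with ‖x̂‖² ≤ r which is a global maximum of J on the ball B_r = {x ∈ X : ‖x‖² ≤ r} and which satisfies ⟨J'(x̂), x̂⟩ < 2 J(x̂). Then there exists a nonempty open interval I ⊆ (0, +∞) such that for every λ ∈ I the equation x = λ·J'(x) has a solution x ≠ 0 with ‖x‖² < r. -/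
open Filter Topology

open Set in
lemma slope_left {f : ℝ → ℝ} {d : ℝ} (hf : HasDerivAt f d 0) :
    Tendsto (slope f 0) (𝓝[<] (0:ℝ)) (𝓝 d) :=
  (hasDerivAt_iff_tendsto_slope.1 hf).mono_left
    (nhdsWithin_mono 0 fun t ht => ne_of_lt ht)

lemma aux_deriv_nonpos {f : ℝ → ℝ} {d : ℝ} (hf : HasDerivAt f d 0)
    (h : ∀ t ∈ Set.Ioo (-1:ℝ) 0, f 0 ≤ f t) : d ≤ 0 := by
  refine le_of_tendsto (slope_left hf) ?_
  filter_upwards [Ioo_mem_nhdsLT_of_mem (show (0:ℝ) ∈ Set.Ioc (-1:ℝ) 0 by simp)] with t ht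
  rw [slope_def_field]
  exact div_nonpos_iff.2 (Or.inl ⟨by linarith [h t ht], by linarith [ht.2]⟩)

lemma aux_deriv_nonneg {f : ℝ → ℝ} {d : ℝ} (hf : HasDerivAt f d 0)
    (h : ∀ t ∈ Set.Ioo (-1:ℝ) 0, f t ≤ f 0) : 0 ≤ d := by
  refine ge_of_tendsto (slope_left hf) ?_
  filter_upwards [Ioo_mem_nhdsLT_of_mem (show (0:ℝ) ∈ Set.Ioc (-1:ℝ) 0 by simp)] with t ht
  rw [slope_def_field]
  exact div_nonneg_iff.2 (Or.inr ⟨by linarith [h t ht], by linarith [ht.2]⟩)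

lemma aux_exists_lt {f : ℝ → ℝ} {d : ℝ} (hf : HasDerivAt f d 0) (hd : 0 < d) :
    ∃ t ∈ Set.Ioo (-1:ℝ) 0, f t < f 0 := by
  have ev := (slope_left hf).eventually (eventually_gt_nhds hd)
  have hmem : ∀ᶠ t in 𝓝[<] (0:ℝ), t ∈ Set.Ioo (-1:ℝ) 0 :=
    eventually_of_mem (Ioo_mem_nhdsLT_of_mem (show (0:ℝ) ∈ Set.Ioc (-1:ℝ) 0 by simp))
      fun t ht => ht
  obtain ⟨t, ht, hs⟩ := (hmem.and ev).exists
  refine ⟨t, ht, ?_⟩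
  rw [slope_def_field] at hs
  by_contra hge
  push_neg at hge
  have : (f t - f 0) / (t - 0) ≤ 0 :=
    div_nonpos_iff.2 (Or.inl ⟨by linarith, by linarith [ht.2]⟩)
  linarith

open Set in
lemma exists_weak_subseq {X : Type*} [NormedAddCommGroup X] [InnerProductSpace ℝ X]
    [CompleteSpace X] (u : ℕ → X) (C : ℝ) (hC : ∀ n, ‖u n‖ ≤ C) :
    ∃ (x : X) (φ : ℕ → ℕ), StrictMono φ ∧ ‖x‖ ≤ C ∧
      ∀ v : X, Tendsto (fun n => (inner ℝ (u (φ n)) v : ℝ)) atTop (𝓝 (inner ℝ x v)) := by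
  have hC0 : 0 ≤ C := le_trans (norm_nonneg (u 0)) (hC 0)
  -- diagonal extraction via compactness of a countable product of intervals
  set g : ℕ → ℕ → ℝ := fun n m => inner ℝ (u n) (u m) with hg
  have hgmem : ∀ n, g n ∈ Set.pi Set.univ (fun _ : ℕ => Set.Icc (-(C*C)) (C*C)) := by
    intro n
    rw [Set.mem_univ_pi]
    intro m
    have h1 : |(inner ℝ (u n) (u m) : ℝ)| ≤ C * C :=
      le_trans (abs_real_inner_le_norm _ _)
        (mul_le_mul (hC n) (hC m) (norm_nonneg _) hC0)
    exact abs_le.1 h1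
  have hScompact : IsCompact (Set.pi Set.univ fun _ : ℕ => Set.Icc (-(C*C)) (C*C)) :=
    isCompact_univ_pi fun _ => isCompact_Icc
  obtain ⟨l, -, φ, hφ, hconv⟩ := hScompact.isSeqCompact hgmem
  have hpt : ∀ m, Tendsto (fun n => (inner ℝ (u (φ n)) (u m) : ℝ)) atTop (𝓝 (l m)) :=
    fun m => (tendsto_pi_nhds.1 hconv) m
  -- convergence on the span of the range
  have hspan : ∀ z ∈ Submodule.span ℝ (Set.range u),
      ∃ L : ℝ, Tendsto (fun n => (inner ℝ (u (φ n)) z : ℝ)) atTop (𝓝 L) := by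
    intro z hz
    induction hz using Submodule.span_induction with
    | mem w h => obtain ⟨m, rfl⟩ := h; exact ⟨l m, hpt m⟩
    | zero => exact ⟨0, by simp⟩
    | add w y hw hy ihw ihy =>
        obtain ⟨Lw, hLw⟩ := ihw; obtain ⟨Ly, hLy⟩ := ihy
        exact ⟨Lw + Ly, by simpa [inner_add_right] using hLw.add hLy⟩
    | smul a w hw ih =>
        obtain ⟨L, hL⟩ := ih
        exact ⟨a * L, by simpa [real_inner_smul_right] using hL.const_mul a⟩
  -- reduce a general v to the closure of the span via orthogonal projection
  set K := (Submodule.span ℝ (Set.range u)).topologicalClosure with hK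
  haveI : CompleteSpace K := (Submodule.isClosed_topologicalClosure _).completeSpace_coe
  have humem : ∀ n, u n ∈ K := fun n =>
    Submodule.le_topologicalClosure _ (Submodule.subset_span ⟨n, rfl⟩)
  have hkey : ∀ (v : X) (n : ℕ),
      (inner ℝ (u n) v : ℝ) = inner ℝ (u n) ((K.orthogonalProjectionOnto v : X)) := by
    intro v n
    have hperp := Submodule.sub_starProjection_mem_orthogonal (K := K) v
    have h2 : (inner ℝ (u n) (v - (K.orthogonalProjectionOnto v : X)) : ℝ) = 0 :=
      (Submodule.mem_orthogonal K _).1 hperp (u n) (humem n)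
    rw [inner_sub_right] at h2
    linarith
  have hCauchy : ∀ v : X, ∃ L : ℝ,
      Tendsto (fun n => (inner ℝ (u (φ n)) v : ℝ)) atTop (𝓝 L) := by
    intro v
    set w : X := (K.orthogonalProjectionOnto v : X) with hw
    have hwmem : w ∈ closure ((Submodule.span ℝ (Set.range u) : Submodule ℝ X) : Set X) := by
      have h3 : w ∈ K := (K.orthogonalProjectionOnto v).2
      rw [← Submodule.topologicalClosure_coe]; exact h3
    have hcau : CauchySeq (fun n => (inner ℝ (u (φ n)) w : ℝ)) := by
      rw [Metric.cauchySeq_iff]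
      intro ε hε
      obtain ⟨z, hzmem, hdz⟩ := Metric.mem_closure_iff.1 hwmem (ε/(3*(C+1))) (by positivity)
      obtain ⟨L, hL⟩ := hspan z hzmem
      obtain ⟨N, hN⟩ := Metric.cauchySeq_iff.1 hL.cauchySeq (ε/3) (by positivity)
      refine ⟨N, fun p hp q hq => ?_⟩
      have hbnd : ∀ k, |(inner ℝ (u (φ k)) w : ℝ) - inner ℝ (u (φ k)) z| ≤ ε/3 := by
        intro k
        rw [← inner_sub_right]
        have h4 : |(inner ℝ (u (φ k)) (w - z) : ℝ)| ≤ C * (ε/(3*(C+1))) :=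
          le_trans (abs_real_inner_le_norm _ _)
            (mul_le_mul (hC _) (by rw [← dist_eq_norm]; exact hdz.le) (norm_nonneg _) hC0)
        have h5 : C * (ε/(3*(C+1))) ≤ ε/3 := by
          have ha : C * (ε/(3*(C+1))) ≤ (C+1) * (ε/(3*(C+1))) :=
            mul_le_mul_of_nonneg_right (by linarith) (by positivity)
          have hb : (C+1) * (ε/(3*(C+1))) = ε/3 := by field_simp
          linarith
        linarith
      have t1 := hbnd p
      have t2 := hbnd q
      have t3 := hN p hp q hq
      rw [Real.dist_eq] at t3 ⊢
      have tri : |(inner ℝ (u (φ p)) w : ℝ) - inner ℝ (u (φ q)) w| ≤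
          |(inner ℝ (u (φ p)) w : ℝ) - inner ℝ (u (φ p)) z|
          + |(inner ℝ (u (φ p)) z : ℝ) - inner ℝ (u (φ q)) z|
          + |(inner ℝ (u (φ q)) z : ℝ) - inner ℝ (u (φ q)) w| := by
        have := abs_sub_le ((inner ℝ (u (φ p)) w : ℝ)) ((inner ℝ (u (φ p)) z : ℝ))
          ((inner ℝ (u (φ q)) w : ℝ))
        have := abs_sub_le ((inner ℝ (u (φ p)) z : ℝ)) ((inner ℝ (u (φ q)) z : ℝ))
          ((inner ℝ (u (φ q)) w : ℝ))
        linarith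
      rw [abs_sub_comm] at t2
      linarith
    obtain ⟨L, hL⟩ := cauchySeq_tendsto_of_complete hcau
    refine ⟨L, ?_⟩
    have : (fun n => (inner ℝ (u (φ n)) v : ℝ)) = fun n => (inner ℝ (u (φ n)) w : ℝ) := by
      funext n; exact hkey v (φ n)
    rw [this]
    exact hL
  choose L hL using hCauchy
  have hbound : ∀ v, |L v| ≤ C * ‖v‖ := by
    intro v
    refine le_of_tendsto (hL v).abs (Eventually.of_forall fun n => ?_)
    exact le_trans (abs_real_inner_le_norm _ _)
      (mul_le_mul_of_nonneg_right (hC _) (norm_nonneg _))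
  have hadd : ∀ v w, L (v + w) = L v + L w := fun v w =>
    tendsto_nhds_unique (hL (v+w)) (by simpa [inner_add_right] using (hL v).add (hL w))
  have hsmul : ∀ (a : ℝ) (v : X), L (a • v) = a * L v := fun a v =>
    tendsto_nhds_unique (hL (a • v)) (by simpa [real_inner_smul_right] using (hL v).const_mul a)
  let f : X →ₗ[ℝ] ℝ :=
    { toFun := L, map_add' := hadd, map_smul' := hsmul }
  let F := f.mkContinuous C (fun v => by simpa [Real.norm_eq_abs, f] using hbound v)
  set x := (InnerProductSpace.toDual ℝ X).symm F with hx
  have hxv : ∀ v, (inner ℝ x v : ℝ) = L v := by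
    intro v
    have h6 : ((InnerProductSpace.toDual ℝ X) x) v = F v := by
      rw [hx, LinearIsometryEquiv.apply_symm_apply]
    rw [InnerProductSpace.toDual_apply_apply] at h6
    exact h6
  refine ⟨x, φ, hφ, ?_, fun v => by rw [hxv v]; exact hL v⟩
  have h2 : (inner ℝ x x : ℝ) = ‖x‖^2 := real_inner_self_eq_norm_sq x
  have h3 := hbound x
  rw [← hxv x, h2, abs_of_nonneg (by positivity : (0:ℝ) ≤ ‖x‖^2)] at h3
  rcases eq_or_lt_of_le (norm_nonneg x) with h|h
  · rw [← h]; exact hC0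
  · nlinarith

lemma hasDerivAt_Phi {X : Type*} [NormedAddCommGroup X] [InnerProductSpace ℝ X]
    (J : X → ℝ) (J' : X → X)
    (hG : ∀ x v : X, HasDerivAt (fun t : ℝ => J (x + t • v)) (inner ℝ (J' x) v : ℝ) 0)
    (lam : ℝ) (x v : X) :
    HasDerivAt (fun t : ℝ => ‖x + t • v‖^2 - 2*lam*J (x + t • v))
      (2*(inner ℝ x v : ℝ) - 2*lam*(inner ℝ (J' x) v : ℝ)) 0 := by
  have h1 : (fun t : ℝ => ‖x + t • v‖^2)
      = fun t : ℝ => ‖x‖^2 + 2*(inner ℝ x v:ℝ)*t + ‖v‖^2*t^2 := by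
    funext t
    rw [norm_add_sq_real, real_inner_smul_right, norm_smul]
    simp [mul_pow, Real.norm_eq_abs, sq_abs]
    ring
  have h2 : HasDerivAt (fun t : ℝ => ‖x‖^2 + 2*(inner ℝ x v:ℝ)*t + ‖v‖^2*t^2)
      (2*(inner ℝ x v:ℝ)) 0 := by
    have ha := (((hasDerivAt_id (0:ℝ)).const_mul (2*(inner ℝ x v:ℝ))).const_add (‖x‖^2)).add
      ((hasDerivAt_pow 2 (0:ℝ)).const_mul (‖v‖^2))
    have hb : HasDerivAt (fun t : ℝ => ‖x‖^2 + 2*(inner ℝ x v:ℝ)*t + ‖v‖^2*t^2)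
        (2*(inner ℝ x v:ℝ) * 1 + ‖v‖^2 * (((2:ℕ):ℝ) * (0:ℝ)^(2-1))) 0 := ha
    convert hb using 1
    norm_num
  have h2' : HasDerivAt (fun t : ℝ => ‖x + t • v‖^2) (2*(inner ℝ x v:ℝ)) 0 := by
    rw [h1]; exact h2
  have h3 : HasDerivAt (fun t : ℝ => 2*lam*J (x + t • v)) (2*lam*(inner ℝ (J' x) v : ℝ)) 0 :=
    (hG x v).const_mul (2*lam)
  exact h2'.sub h3

set_option maxHeartbeats 1000000 in
/-- Ricceri's abstract result (Theorem C of the paper): if `J` is sequentially weakly upper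
semicontinuous, Gâteaux differentiable with `J 0 = 0`, and for some `r > 0` a global maximum
`x̂` of `J` on the ball `{‖x‖² ≤ r}` satisfies `⟪J' x̂, x̂⟫ < 2 J x̂`, then there is a nonempty
open interval `I ⊆ (0, ∞)` such that for each `λ ∈ I` the equation `x = λ • J' x` has a
nonzero solution with `‖x‖² < r`. -/
theorem stmt_0
    {X : Type*} [NormedAddCommGroup X] [InnerProductSpace ℝ X] [CompleteSpace X]
    (J : X → ℝ) (J' : X → X)
    (hJ0 : J 0 = 0)
    (hwusc : ∀ (x : X) (xn : ℕ → X),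
      (∀ v : X, Tendsto (fun n => (inner ℝ (xn n) v : ℝ)) atTop (𝓝 (inner ℝ x v))) →
      Filter.limsup (fun n => J (xn n)) atTop ≤ J x)
    (hG : ∀ x v : X, HasDerivAt (fun t : ℝ => J (x + t • v)) (inner ℝ (J' x) v : ℝ) 0)
    (r : ℝ) (hr : 0 < r)
    (xhat : X) (hmem : ‖xhat‖ ^ 2 ≤ r)
    (hmax : ∀ x : X, ‖x‖ ^ 2 ≤ r → J x ≤ J xhat)
    (hcond : (inner ℝ (J' xhat) xhat : ℝ) < 2 * J xhat) :
    ∃ a b : ℝ, 0 ≤ a ∧ a < b ∧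
      ∀ lam ∈ Set.Ioo a b, ∃ x : X, x ≠ 0 ∧ ‖x‖ ^ 2 < r ∧ x = lam • J' x := by
  -- step 1 : J xhat > 0
  have hJ0le : (0:ℝ) ≤ J xhat := by
    have h := hmax 0 (by simpa using hr.le)
    rwa [hJ0] at h
  have hballnorm : ∀ (y : X) (t : ℝ), ‖y‖^2 ≤ r → t ∈ Set.Ioo (-1:ℝ) 0 →
      ‖y + t • y‖^2 ≤ r := by
    intro y t hy ht
    have he : y + t • y = (1+t) • y := by rw [add_smul, one_smul]
    rw [he, norm_smul, mul_pow, Real.norm_eq_abs, sq_abs]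
    have h1 : (1+t)^2 ≤ 1 := by nlinarith [ht.1, ht.2]
    nlinarith [mul_le_mul_of_nonneg_right h1 (sq_nonneg ‖y‖)]
  have hJpos : 0 < J xhat := by
    rcases hJ0le.eq_or_lt with h|h
    · exfalso
      have hneg : (inner ℝ (J' xhat) xhat : ℝ) < 0 := by rw [← h] at hcond; linarith
      have hmaxleft : ∀ t ∈ Set.Ioo (-1:ℝ) 0,
          J (xhat + t • xhat) ≤ J (xhat + (0:ℝ) • xhat) := by
        intro t ht
        have hn := hballnorm xhat t hmem ht
        simpa using hmax _ hn
      have := aux_deriv_nonneg (hG xhat xhat) hmaxleft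
      linarith
    · exact h
  set lam0 := r / (2 * J xhat) with hlam0def
  have hlam0 : 0 < lam0 := div_pos hr (by linarith)
  have hlam0id : 2 * lam0 * J xhat = r := by
    rw [hlam0def]; field_simp
  -- step 2 : a point y0 in the ball with Φ lam0 y0 < 0
  obtain ⟨y0, hy0r, hy0neg⟩ : ∃ y0 : X, ‖y0‖^2 ≤ r ∧ ‖y0‖^2 - 2*lam0*J y0 < 0 := by
    rcases lt_or_ge (‖xhat‖^2) r with hb|hb
    · exact ⟨xhat, hmem, by linarith [hlam0id]⟩
    · have hbr : ‖xhat‖^2 = r := le_antisymm hmem hb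
      have hder := hasDerivAt_Phi J J' hG lam0 xhat xhat
      have hip : (inner ℝ xhat xhat:ℝ) = r := by rw [real_inner_self_eq_norm_sq, hbr]
      have hdpos : 0 < 2*(inner ℝ xhat xhat:ℝ) - 2*lam0*(inner ℝ (J' xhat) xhat:ℝ) := by
        rw [hip]
        have := mul_lt_mul_of_pos_left hcond hlam0
        nlinarith [hlam0id]
      obtain ⟨t, ht, hlt⟩ := aux_exists_lt hder hdpos
      have hzero : ‖xhat + (0:ℝ) • xhat‖^2 - 2*lam0*J (xhat + (0:ℝ) • xhat) = 0 := by
        simp only [zero_smul, add_zero]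
        rw [hbr]; linarith [hlam0id]
      exact ⟨xhat + t • xhat, hballnorm xhat t hmem ht, by linarith [hlt, hzero]⟩
  set c := ‖y0‖^2 - 2*lam0*J y0 with hcdef
  set δ := min (lam0/2) ((-c)/(4*(|J y0|+1))) with hδdef
  have hcneg : c < 0 := hy0neg
  have hδpos : 0 < δ := lt_min (by linarith) (div_pos (by linarith) (by positivity))
  have hδhalf : δ ≤ lam0/2 := min_le_left _ _
  refine ⟨lam0 - δ, lam0, by linarith, by linarith, ?_⟩
  intro lam hlam
  obtain ⟨hlama, hlamb⟩ := hlam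
  have hlampos : 0 < lam := by linarith
  -- Φ lam y0 < 0
  have hy0lam : ‖y0‖^2 - 2*lam*J y0 < 0 := by
    have h1 : lam0 - lam < δ := by linarith
    have h2 : 0 < lam0 - lam := by linarith
    have h3 : δ ≤ (-c)/(4*(|J y0|+1)) := min_le_right _ _
    have h4 : δ * (4*(|J y0|+1)) ≤ -c := by
      rw [← le_div_iff₀ (by positivity)]; exact h3
    have h5 : (lam0 - lam) * J y0 ≤ δ * (|J y0| + 1) := by
      have ha : (lam0 - lam) * J y0 ≤ (lam0 - lam) * (|J y0| + 1) :=
        mul_le_mul_of_nonneg_left (by linarith [le_abs_self (J y0)]) h2.le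
      have hb : (lam0 - lam) * (|J y0| + 1) ≤ δ * (|J y0| + 1) :=
        mul_le_mul_of_nonneg_right h1.le (by positivity)
      linarith
    have hcval : c = ‖y0‖^2 - 2*lam0*J y0 := hcdef
    nlinarith [abs_nonneg (J y0)]
  -- minimization of Φ lam on the ball
  set S := (fun y : X => ‖y‖^2 - 2*lam*J y) '' {y : X | ‖y‖^2 ≤ r} with hSdef
  have hSne : S.Nonempty := ⟨_, ⟨0, by simp [hr.le], rfl⟩⟩
  have hSbdd : BddBelow S := by
    refine ⟨-(2*lam*J xhat), ?_⟩
    rintro e ⟨y, hy, rfl⟩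
    simp only [Set.mem_setOf_eq] at hy
    have h := mul_le_mul_of_nonneg_left (hmax y hy) (by linarith : (0:ℝ) ≤ 2*lam)
    show -(2*lam*J xhat) ≤ ‖y‖^2 - 2*lam*J y
    nlinarith [sq_nonneg ‖y‖]
  set m := sInf S with hmdef
  have hmle : ∀ y : X, ‖y‖^2 ≤ r → m ≤ ‖y‖^2 - 2*lam*J y := fun y hy =>
    csInf_le hSbdd ⟨y, hy, rfl⟩
  have hseq : ∀ n : ℕ, ∃ y : X, ‖y‖^2 ≤ r ∧ ‖y‖^2 - 2*lam*J y < m + 1/((n:ℝ)+1) := by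
    intro n
    obtain ⟨e, he, hlt⟩ := Real.lt_sInf_add_pos hSne (show (0:ℝ) < 1/((n:ℝ)+1) by positivity)
    obtain ⟨y, hy, rfl⟩ := he
    exact ⟨y, hy, hlt⟩
  choose z hz1 hz2 using hseq
  have htendE : Tendsto (fun n => ‖z n‖^2 - 2*lam*J (z n)) atTop (𝓝 m) := by
    have hup : Tendsto (fun n : ℕ => m + 1/((n:ℝ)+1)) atTop (𝓝 m) := by
      have h := tendsto_one_div_add_atTop_nhds_zero_nat (𝕜 := ℝ)
      simpa using tendsto_const_nhds.add h
    exact tendsto_of_tendsto_of_tendsto_of_le_of_le tendsto_const_nhds hup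
      (fun n => hmle _ (hz1 n)) (fun n => (hz2 n).le)
  have hzC : ∀ n, ‖z n‖ ≤ Real.sqrt r := by
    intro n
    have h := hz1 n
    nlinarith [Real.sq_sqrt hr.le, Real.sqrt_nonneg r, norm_nonneg (z n)]
  obtain ⟨x, φ, hφ, hxC, hweak⟩ := exists_weak_subseq z (Real.sqrt r) hzC
  have hxball : ‖x‖^2 ≤ r := by
    nlinarith [Real.sq_sqrt hr.le, Real.sqrt_nonneg r, norm_nonneg x]
  have hEφ : Tendsto (fun n => ‖z (φ n)‖^2 - 2*lam*J (z (φ n))) atTop (𝓝 m) :=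
    htendE.comp hφ.tendsto_atTop
  have hlimsup : limsup (fun n => J (z (φ n))) atTop ≤ J x := hwusc x _ hweak
  -- Φ lam x ≤ m : weak lower semicontinuity of Φ
  have hEx : ‖x‖^2 - 2*lam*J x ≤ m := by
    refine le_of_forall_pos_le_add fun ε hε => ?_
    set ε' := ε/(2+2*lam) with hε'def
    have hε' : 0 < ε' := div_pos hε (by linarith)
    have hbJ : IsBoundedUnder (· ≤ ·) atTop (fun n => J (z (φ n))) :=
      ⟨J xhat, Filter.eventually_map.2 (Eventually.of_forall fun n => hmax _ (hz1 _))⟩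
    have ev1 : ∀ᶠ n in atTop, J (z (φ n)) < J x + ε' :=
      eventually_lt_of_limsup_lt (lt_of_le_of_lt hlimsup (by linarith)) hbJ
    have ev2 : ∀ᶠ n in atTop, ‖x‖^2 - ε' < (inner ℝ (z (φ n)) x : ℝ) := by
      have hx2 : (inner ℝ x x:ℝ) = ‖x‖^2 := real_inner_self_eq_norm_sq x
      exact (hweak x).eventually (eventually_gt_nhds (by rw [hx2]; linarith))
    have ev : ∀ᶠ n in atTop,
        ‖x‖^2 - 2*lam*J x - ε ≤ ‖z (φ n)‖^2 - 2*lam*J (z (φ n)) := by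
      filter_upwards [ev1, ev2] with n h1 h2
      have h3 : 2*(inner ℝ (z (φ n)) x:ℝ) - ‖x‖^2 ≤ ‖z (φ n)‖^2 := by
        linarith [sq_nonneg (‖z (φ n) - x‖), norm_sub_sq_real (z (φ n)) x]
      have h4 : 2*lam*J (z (φ n)) ≤ 2*lam*(J x + ε') :=
        mul_le_mul_of_nonneg_left h1.le (by linarith)
      have hεeq : (2+2*lam)*ε' = ε := by
        have hne : (2+2*lam) ≠ 0 := by linarith
        rw [hε'def]; field_simp
      linarith
    have hfin := ge_of_tendsto hEφ ev
    linarith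
  have hxne : x ≠ 0 := by
    intro h
    have h0 : ‖x‖^2 - 2*lam*J x = 0 := by rw [h]; simp [hJ0]
    have hy := hmle y0 hy0r
    linarith
  -- the minimizer is interior
  have hxlt : ‖x‖^2 < r := by
    rcases lt_or_ge (‖x‖^2) r with h|h
    · exact h
    · exfalso
      have hxr : ‖x‖^2 = r := le_antisymm hxball h
      have hA : m ≤ ‖xhat‖^2 - 2*lam*J xhat := hmle xhat hmem
      have h2l : 2*lam*J xhat ≤ 2*lam*J x := by nlinarith [hEx, hA, hmem, hxr]
      have hJxx : J x = J xhat :=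
        le_antisymm (hmax x hxball)
          (le_of_mul_le_mul_left (by linarith : (2*lam)*J xhat ≤ (2*lam)*J x)
            (by linarith : (0:ℝ) < 2*lam))
      have h5 : r - 2*lam*J xhat ≤ m := by
        have := hEx
        rw [hxr, hJxx] at this
        exact this
      have hxhr : ‖xhat‖^2 = r := le_antisymm hmem (by linarith [h5, hA])
      have hmin : ∀ t ∈ Set.Ioo (-1:ℝ) 0,
          (fun t : ℝ => ‖xhat + t • xhat‖^2 - 2*lam*J (xhat + t • xhat)) 0
            ≤ (fun t : ℝ => ‖xhat + t • xhat‖^2 - 2*lam*J (xhat + t • xhat)) t := by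
        intro t ht
        have hball := hballnorm xhat t hmem ht
        have h7 := hmle _ hball
        simp only [zero_smul, add_zero]
        rw [hxhr]
        linarith
      have hd := aux_deriv_nonpos (hasDerivAt_Phi J J' hG lam xhat xhat) hmin
      have hip : (inner ℝ xhat xhat:ℝ) = r := by rw [real_inner_self_eq_norm_sq, hxhr]
      rw [hip] at hd
      have h8 : lam * (inner ℝ (J' xhat) xhat:ℝ) < lam * (2*J xhat) :=
        mul_lt_mul_of_pos_left hcond hlampos
      have h9 : 2*lam*J xhat < 2*lam0*J xhat := by nlinarith
      linarith [hlam0id]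
  -- Euler equation at the interior minimizer
  have heuler : ∀ v : X, 2*(inner ℝ x v:ℝ) - 2*lam*(inner ℝ (J' x) v:ℝ) = 0 := by
    intro v
    have hder := hasDerivAt_Phi J J' hG lam x v
    have hcont : Continuous (fun t : ℝ => ‖x + t • v‖^2) := by
      have h1 : Continuous (fun t : ℝ => x + t • v) :=
        continuous_const.add (continuous_id.smul continuous_const)
      exact (h1.norm).pow 2
    have hopen : {t : ℝ | ‖x + t • v‖^2 < r} ∈ 𝓝 (0:ℝ) := by
      have ho : IsOpen {t : ℝ | ‖x + t • v‖^2 < r} := isOpen_lt hcont continuous_const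
      exact ho.mem_nhds (by simpa using hxlt)
    have hloc : IsLocalMin (fun t : ℝ => ‖x + t • v‖^2 - 2*lam*J (x + t • v)) 0 := by
      have hev : ∀ᶠ t in 𝓝 (0:ℝ),
          (fun t : ℝ => ‖x + t • v‖^2 - 2*lam*J (x + t • v)) 0
            ≤ (fun t : ℝ => ‖x + t • v‖^2 - 2*lam*J (x + t • v)) t := by
        filter_upwards [hopen] with t ht
        have h7 := hmle _ (le_of_lt ht)
        simp only [zero_smul, add_zero]
        linarith [hEx]
      exact hev
    exact hloc.hasDerivAt_eq_zero hder
  have hfin : x - lam • J' x = 0 := by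
    have h := heuler (x - lam • J' x)
    have h2 : (inner ℝ (x - lam • J' x) (x - lam • J' x) : ℝ) = 0 := by
      rw [inner_sub_left, real_inner_smul_left]
      linarith
    exact inner_self_eq_zero.1 h2
  exact ⟨x, hxne, hxlt, by rw [← sub_eq_zero]; exact hfin⟩
end

section
/- Let f : [0, ∞) → [0, ∞) be continuous with f(0) = 0 and set F(ξ) = ∫₀^ξ f(t) dt. Let a > 0 and assume f(ξ)·ξ ≤ 2·F(ξ) for every ξ ∈ [0, a]. Define the truncation f̃ : ℝ → ℝ by f̃(ξ) = 0 for ξ ≤ 0, f̃(ξ) = f(ξ) for 0 < ξ ≤ a, and f̃(ξ) = f(a) for ξ > a, and set F̃(ξ) = ∫₀^ξ f̃(t) dt. Then f̃(ξ)·ξ ≤ 2·F̃(ξ) for all ξ ∈ ℝ, and consequently the function ξ ↦ F̃(ξ)/ξ² is non-increasing on (0, +∞). -/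
/-- If `f ξ * ξ ≤ 2 F ξ` on `[0,a]`, then the truncation `f̃` (equal to `0` on `(-∞,0]`,
to `f` on `(0,a]` and to `f a` on `(a,∞)`) with primitive `F̃` satisfies
`f̃ ξ * ξ ≤ 2 F̃ ξ` for all `ξ ∈ ℝ`, and consequently `ξ ↦ F̃ ξ / ξ²` is non-increasing
on `(0, ∞)`. -/
theorem stmt_3
    (f : ℝ → ℝ) (hf_cont : ContinuousOn f (Set.Ici 0))
    (hf_nonneg : ∀ ξ ≥ (0:ℝ), 0 ≤ f ξ) (hf0 : f 0 = 0)
    (F : ℝ → ℝ) (hF : ∀ ξ, F ξ = ∫ t in (0:ℝ)..ξ, f t)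
    (a : ℝ) (ha : 0 < a)
    (hineq : ∀ ξ ∈ Set.Icc (0:ℝ) a, f ξ * ξ ≤ 2 * F ξ)
    (ftil : ℝ → ℝ)
    (hftil : ∀ ξ : ℝ, ftil ξ = if ξ ≤ 0 then 0 else if ξ ≤ a then f ξ else f a)
    (Ftil : ℝ → ℝ) (hFtil : ∀ ξ, Ftil ξ = ∫ t in (0:ℝ)..ξ, ftil t) :
    (∀ ξ : ℝ, ftil ξ * ξ ≤ 2 * Ftil ξ) ∧
      (∀ ξ₁ ξ₂ : ℝ, 0 < ξ₁ → ξ₁ ≤ ξ₂ → Ftil ξ₂ / ξ₂ ^ 2 ≤ Ftil ξ₁ / ξ₁ ^ 2) := by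
  -- clamp representation
  have hclamp : ∀ ξ, ftil ξ = f (min (max ξ 0) a) := by
    intro ξ
    rw [hftil]
    rcases le_or_gt ξ 0 with h | h
    · rw [if_pos h, max_eq_right h, min_eq_left ha.le, hf0]
    · rw [if_neg (not_le.2 h), max_eq_left h.le]
      rcases le_or_gt ξ a with h2 | h2
      · rw [if_pos h2, min_eq_left h2]
      · rw [if_neg (not_le.2 h2), min_eq_right h2.le]
  have hcont : Continuous ftil := by
    have heq : ftil = fun ξ => f (min (max ξ 0) a) := funext hclamp
    rw [heq]
    exact hf_cont.comp_continuous
      ((continuous_id.max continuous_const).min continuous_const)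
      (fun x => le_min (le_max_right _ _) ha.le)
  have hftil_nonneg : ∀ ξ, 0 ≤ ftil ξ := by
    intro ξ
    rw [hclamp]
    exact hf_nonneg _ (le_min (le_max_right _ _) ha.le)
  -- Ftil on ξ ≤ 0
  have hFtil_neg : ∀ ξ ≤ (0:ℝ), Ftil ξ = 0 := by
    intro ξ hξ
    rw [hFtil]
    rw [intervalIntegral.integral_congr (g := fun _ => (0:ℝ))
      (by
        intro t ht
        rw [Set.uIcc_of_ge hξ] at ht
        rw [hftil, if_pos ht.2]), intervalIntegral.integral_zero]
  -- Ftil = F on [0, a]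
  have hFtil_eq : ∀ ξ ∈ Set.Icc (0:ℝ) a, Ftil ξ = F ξ := by
    intro ξ hξ
    rw [hFtil, hF]
    apply intervalIntegral.integral_congr
    intro t ht
    rw [Set.uIcc_of_le hξ.1] at ht
    rw [hftil]
    rcases le_or_gt t 0 with h | h
    · have : t = 0 := le_antisymm h ht.1
      rw [if_pos h, this, hf0]
    · rw [if_neg (not_le.2 h), if_pos (ht.2.trans hξ.2)]
  -- Ftil beyond a
  have hFtil_gt : ∀ ξ > a, Ftil ξ = F a + f a * (ξ - a) := by
    intro ξ hξ
    have h1 : Ftil ξ = Ftil a + ∫ t in a..ξ, ftil t := by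
      rw [hFtil ξ, hFtil a]
      rw [intervalIntegral.integral_add_adjacent_intervals
        (hcont.intervalIntegrable 0 a) (hcont.intervalIntegrable a ξ)]
    have h2 : (∫ t in a..ξ, ftil t) = f a * (ξ - a) := by
      rw [intervalIntegral.integral_congr (g := fun _ => f a)
        (by
          intro t ht
          rw [Set.uIcc_of_le hξ.le] at ht
          rw [hftil, if_neg (not_le.2 (lt_of_lt_of_le ha ht.1))]
          rcases le_or_gt t a with h | h
          · rw [if_pos h]
            have : t = a := le_antisymm h ht.1
            rw [this]
          · rw [if_neg (not_le.2 h)]), intervalIntegral.integral_const]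
      rw [smul_eq_mul]; ring
    rw [h1, h2, hFtil_eq a ⟨ha.le, le_refl a⟩]
  -- main pointwise inequality
  have hkey : ∀ ξ : ℝ, ftil ξ * ξ ≤ 2 * Ftil ξ := by
    intro ξ
    rcases le_or_gt ξ 0 with h | h
    · rw [hFtil_neg ξ h, hftil, if_pos h]
      simp
    · rcases le_or_gt ξ a with h2 | h2
      · rw [hFtil_eq ξ ⟨h.le, h2⟩, hftil, if_neg (not_le.2 h), if_pos h2]
        exact hineq ξ ⟨h.le, h2⟩
      · rw [hFtil_gt ξ h2, hftil, if_neg (not_le.2 h), if_neg (not_le.2 h2)]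
        have ha2 := hineq a ⟨ha.le, le_refl a⟩
        have hfa := hf_nonneg a ha.le
        nlinarith
  refine ⟨hkey, ?_⟩
  -- differentiability of Ftil
  have hderiv : ∀ x : ℝ, HasDerivAt Ftil (ftil x) x := by
    intro x
    have heq : Ftil = fun u => ∫ t in (0:ℝ)..u, ftil t := funext hFtil
    rw [heq]
    exact intervalIntegral.integral_hasDerivAt_right
      (hcont.intervalIntegrable 0 x)
      (hcont.stronglyMeasurable.stronglyMeasurableAtFilter)
      hcont.continuousAt
  have hGderiv : ∀ x : ℝ, 0 < x →
      HasDerivAt (fun ξ => Ftil ξ / ξ ^ 2)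
        ((ftil x * x ^ 2 - Ftil x * (2 * x)) / (x ^ 2) ^ 2) x := by
    intro x hx
    have hp : HasDerivAt (fun ξ : ℝ => ξ ^ 2) (2 * x) x := by
      simpa using hasDerivAt_pow 2 x
    exact (hderiv x).div hp (pow_ne_zero 2 hx.ne')
  have hanti : AntitoneOn (fun ξ => Ftil ξ / ξ ^ 2) (Set.Ioi 0) := by
    apply antitoneOn_of_deriv_nonpos (convex_Ioi 0)
    · intro x hx
      exact ((hGderiv x hx).continuousAt).continuousWithinAt
    · intro x hx
      rw [interior_Ioi] at hx
      exact ((hGderiv x hx).differentiableAt).differentiableWithinAt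
    · intro x hx
      rw [interior_Ioi] at hx
      rw [(hGderiv x hx).deriv]
      apply div_nonpos_of_nonpos_of_nonneg
      · have hx' : (0:ℝ) < x := hx
        have := hkey x
        nlinarith [mul_le_mul_of_nonneg_left this hx'.le]
      · positivity
  intro ξ₁ ξ₂ h1 h12
  exact hanti (Set.mem_Ioi.2 h1) (Set.mem_Ioi.2 (h1.trans_le h12)) h12
end

section
/- Let f : [0, ∞) → [0, ∞) be continuous with f(0) = 0 and set F(ξ) = ∫₀^ξ f(t) dt. Let a > 0 and assume the function ξ ↦ F(ξ)/ξ² is non-increasing on (0, a] and that σ₁ := lim_{ξ→0⁺} F(ξ)/ξ² exists and is finite. Define the truncation f̃ and its primitive F̃ as usual. Then σ₁ = sup_{ξ>0} F̃(ξ)/ξ², and for all ξ ≥ 0 one has F̃(ξ) ≤ σ₁·ξ² and f̃(ξ) ≤ 2·σ₁·ξ. -/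
open Filter Topology

/-- Derivative at a point in the "interior" of an antitone region is nonpositive. -/
lemma deriv_nonpos_of_antitone_aux {G : ℝ → ℝ} {g ξ a : ℝ}
    (hG : HasDerivAt G g ξ) (hξ : 0 < ξ) (hξa : ξ < a)
    (hanti : ∀ y, ξ < y → y ≤ a → G y ≤ G ξ) : g ≤ 0 := by
  have hslope : Tendsto (slope G ξ) (𝓝[>] ξ) (𝓝 g) :=
    (hasDerivAt_iff_tendsto_slope.mp hG).mono_left
      (nhdsWithin_mono _ (fun y hy => Set.mem_compl_singleton_iff.mpr (ne_of_gt hy)))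
  refine le_of_tendsto hslope ?_
  filter_upwards [Ioc_mem_nhdsGT_of_mem ⟨le_refl ξ, hξa⟩] with y hy
  have h1 : G y ≤ G ξ := hanti y hy.1 hy.2
  have h2 : (0:ℝ) < y - ξ := by linarith [hy.1]
  rw [slope_def_field]
  exact div_nonpos_of_nonpos_of_nonneg (by linarith) (le_of_lt h2)

/-- If `ξ ↦ F ξ / ξ²` is non-increasing on `(0, a]` and `σ₁ = lim_{ξ→0⁺} F ξ / ξ²` exists
(finite), then `σ₁ = sup_{ξ > 0} F̃ ξ / ξ²`, and `F̃ ξ ≤ σ₁ ξ²`, `f̃ ξ ≤ 2 σ₁ ξ` for all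
`ξ ≥ 0`, where `f̃` is the truncation of `f` at `a` and `F̃` its primitive. -/
theorem stmt_4
    (f : ℝ → ℝ) (hf_cont : ContinuousOn f (Set.Ici 0))
    (hf_nonneg : ∀ ξ ≥ (0:ℝ), 0 ≤ f ξ) (hf0 : f 0 = 0)
    (F : ℝ → ℝ) (hF : ∀ ξ, F ξ = ∫ t in (0:ℝ)..ξ, f t)
    (a : ℝ) (ha : 0 < a)
    (hmono : ∀ ξ₁ ξ₂ : ℝ, 0 < ξ₁ → ξ₁ ≤ ξ₂ → ξ₂ ≤ a → F ξ₂ / ξ₂ ^ 2 ≤ F ξ₁ / ξ₁ ^ 2)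
    (ftil : ℝ → ℝ)
    (hftil : ∀ ξ : ℝ, ftil ξ = if ξ ≤ 0 then 0 else if ξ ≤ a then f ξ else f a)
    (Ftil : ℝ → ℝ) (hFtil : ∀ ξ, Ftil ξ = ∫ t in (0:ℝ)..ξ, ftil t)
    (σ₁ : ℝ)
    (hσ₁ : Tendsto (fun ξ => F ξ / ξ ^ 2) (nhdsWithin 0 (Set.Ioi 0)) (𝓝 σ₁)) :
    IsLUB {y : ℝ | ∃ ξ : ℝ, 0 < ξ ∧ y = Ftil ξ / ξ ^ 2} σ₁ ∧
      ∀ ξ : ℝ, 0 ≤ ξ → Ftil ξ ≤ σ₁ * ξ ^ 2 ∧ ftil ξ ≤ 2 * σ₁ * ξ := by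
  -- ftil agrees with f on [0, a]
  have hor : ∀ t ∈ Set.Icc (0:ℝ) a, ftil t = f t := by
    intro t ht
    rw [hftil]
    rcases eq_or_lt_of_le ht.1 with h | h
    · simp [← h, hf0]
    · rw [if_neg (not_le.2 h), if_pos ht.2]
  -- Ftil = F on [0, a]
  have hFtilF : ∀ ξ ∈ Set.Icc (0:ℝ) a, Ftil ξ = F ξ := by
    intro ξ hξ
    rw [hFtil, hF]
    apply intervalIntegral.integral_congr
    intro t ht
    rw [Set.uIcc_of_le hξ.1] at ht
    exact hor t ⟨ht.1, ht.2.trans hξ.2⟩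
  -- F is nonnegative
  have hF0 : ∀ ξ, 0 ≤ ξ → 0 ≤ F ξ := by
    intro ξ hξ
    rw [hF]
    exact intervalIntegral.integral_nonneg hξ (fun u hu => hf_nonneg u hu.1)
  -- σ₁ is nonnegative
  have hσnn : 0 ≤ σ₁ := by
    refine ge_of_tendsto hσ₁ ?_
    filter_upwards [self_mem_nhdsWithin] with ξ hξ
    exact div_nonneg (hF0 ξ (le_of_lt hξ)) (sq_nonneg ξ)
  -- F ξ / ξ² ≤ σ₁ on (0, a]
  have hle : ∀ ξ, 0 < ξ → ξ ≤ a → F ξ / ξ ^ 2 ≤ σ₁ := by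
    intro ξ hξ hξa
    refine ge_of_tendsto hσ₁ ?_
    filter_upwards [Ioc_mem_nhdsGT_of_mem ⟨le_refl (0:ℝ), hξ⟩] with η hη
    exact hmono η ξ hη.1 hη.2 hξa
  have hleF : ∀ ξ, 0 < ξ → ξ ≤ a → F ξ ≤ σ₁ * ξ ^ 2 := by
    intro ξ hξ hξa
    have := hle ξ hξ hξa
    have h2 : (0:ℝ) < ξ ^ 2 := by positivity
    calc F ξ = F ξ / ξ ^ 2 * ξ ^ 2 := by field_simp
    _ ≤ σ₁ * ξ ^ 2 := by nlinarith
  -- derivative of F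
  have hFe : F = fun u => ∫ t in (0:ℝ)..u, f t := funext hF
  have hFd : ∀ ξ : ℝ, 0 < ξ → HasDerivAt F (f ξ) ξ := by
    intro ξ hξ
    rw [hFe]
    have hca : ContinuousAt f ξ := hf_cont.continuousAt (Ici_mem_nhds hξ)
    have hint : IntervalIntegrable f MeasureTheory.volume 0 ξ := by
      apply ContinuousOn.intervalIntegrable
      rw [Set.uIcc_of_le hξ.le]
      exact hf_cont.mono (fun t ht => ht.1)
    exact intervalIntegral.integral_hasDerivAt_right hint
      (ContinuousOn.stronglyMeasurableAtFilter isOpen_Ioi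
        (hf_cont.mono (fun t ht => le_of_lt ht)) ξ hξ) hca
  -- f ξ * ξ ≤ 2 F ξ on (0, a)
  have hfF : ∀ ξ, 0 < ξ → ξ < a → f ξ * ξ ≤ 2 * F ξ := by
    intro ξ hξ hξa
    have h2 : (0:ℝ) < ξ ^ 2 := by positivity
    have hGd : HasDerivAt (fun u => F u / u ^ 2)
        ((f ξ * ξ ^ 2 - F ξ * (2 * ξ ^ 1)) / (ξ ^ 2) ^ 2) ξ := by
      exact HasDerivAt.div (hFd ξ hξ) (by simpa using hasDerivAt_pow 2 ξ) (ne_of_gt h2)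
    have hg : (f ξ * ξ ^ 2 - F ξ * (2 * ξ ^ 1)) / (ξ ^ 2) ^ 2 ≤ 0 :=
      deriv_nonpos_of_antitone_aux hGd hξ hξa
        (fun y hy hya => hmono ξ y hξ hy.le hya)
    have h4 : (0:ℝ) < (ξ ^ 2) ^ 2 := by positivity
    have := (div_nonpos_iff.mp hg)
    rcases this with ⟨h, _⟩ | ⟨h, h'⟩
    · nlinarith
    · nlinarith
  -- f ξ ≤ 2 σ₁ ξ on (0, a]
  have hflin : ∀ ξ, 0 < ξ → ξ ≤ a → f ξ ≤ 2 * σ₁ * ξ := by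
    have hIoo : ∀ ξ, 0 < ξ → ξ < a → f ξ ≤ 2 * σ₁ * ξ := by
      intro ξ hξ hξa
      have h1 := hfF ξ hξ hξa
      have h2 := hleF ξ hξ hξa.le
      nlinarith
    intro ξ hξ hξa
    rcases lt_or_eq_of_le hξa with h | h
    · exact hIoo ξ hξ h
    · subst h
      -- take a limit from the left
      have hne : (𝓝[Set.Ioo 0 ξ] ξ).NeBot := by
        apply mem_closure_iff_nhdsWithin_neBot.mp
        rw [closure_Ioo (ne_of_lt hξ)]
        exact ⟨hξ.le, le_refl ξ⟩
      have htf : Tendsto f (𝓝[Set.Ioo 0 ξ] ξ) (𝓝 (f ξ)) := by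
        have : ContinuousWithinAt f (Set.Ioo 0 ξ) ξ :=
          (hf_cont.continuousWithinAt (Set.mem_Ici.mpr hξ.le)).mono
            (fun t ht => ht.1.le)
        exact this
      have htg : Tendsto (fun η => 2 * σ₁ * η) (𝓝[Set.Ioo 0 ξ] ξ) (𝓝 (2 * σ₁ * ξ)) := by
        apply Tendsto.mono_left _ nhdsWithin_le_nhds
        exact (continuous_const.mul continuous_id).tendsto ξ
      refine le_of_tendsto_of_tendsto htf htg ?_
      filter_upwards [self_mem_nhdsWithin] with η hη
      exact hIoo η hη.1 hη.2
  -- value of Ftil beyond a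
  have hFtilgt : ∀ ξ, a < ξ → Ftil ξ = F a + f a * (ξ - a) := by
    intro ξ hξ
    have hles : a ≤ ξ := hξ.le
    have hi1 : IntervalIntegrable ftil MeasureTheory.volume 0 a := by
      apply ContinuousOn.intervalIntegrable
      rw [Set.uIcc_of_le ha.le]
      exact ContinuousOn.congr (hf_cont.mono (fun t ht => ht.1)) hor
    have hor2 : Set.EqOn ftil (fun _ => f a) (Set.Icc a ξ) := by
      intro t ht
      rw [hftil]
      rcases eq_or_lt_of_le ht.1 with h | h
      · rw [if_neg (by linarith : ¬ t ≤ 0), if_pos (le_of_eq h.symm), ← h]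
      · rw [if_neg (by linarith : ¬ t ≤ 0), if_neg (not_le.2 h)]
    have hi2 : IntervalIntegrable ftil MeasureTheory.volume a ξ := by
      apply ContinuousOn.intervalIntegrable
      rw [Set.uIcc_of_le hles]
      exact ContinuousOn.congr continuousOn_const hor2
    have hsplit := intervalIntegral.integral_add_adjacent_intervals hi1 hi2
    have h2 : (∫ t in a..ξ, ftil t) = f a * (ξ - a) := by
      rw [intervalIntegral.integral_congr (g := fun _ => f a)
        (by rw [Set.uIcc_of_le hles]; exact hor2)]
      simp [intervalIntegral.integral_const, mul_comm]
    rw [hFtil, ← hsplit, h2, ← hFtil, hFtilF a ⟨ha.le, le_refl a⟩]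
  -- Ftil bound
  have hFb : ∀ ξ : ℝ, 0 ≤ ξ → Ftil ξ ≤ σ₁ * ξ ^ 2 := by
    intro ξ hξ
    rcases eq_or_lt_of_le hξ with h | h
    · rw [← h, hFtil]
      simp
    · rcases le_or_gt ξ a with h2 | h2
      · rw [hFtilF ξ ⟨hξ, h2⟩]
        exact hleF ξ h h2
      · rw [hFtilgt ξ h2]
        have h3 := hleF a ha (le_refl a)
        have h4 := hflin a ha (le_refl a)
        nlinarith [sq_nonneg (ξ - a), mul_nonneg hσnn (sq_nonneg (ξ - a))]
  -- ftil bound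
  have hfb : ∀ ξ : ℝ, 0 ≤ ξ → ftil ξ ≤ 2 * σ₁ * ξ := by
    intro ξ hξ
    rcases eq_or_lt_of_le hξ with h | h
    · rw [hftil, if_pos (le_of_eq h.symm)]
      rw [← h]; ring_nf; rfl
    · rcases le_or_gt ξ a with h2 | h2
      · rw [hftil, if_neg (not_le.2 h), if_pos h2]
        exact hflin ξ h h2
      · rw [hftil, if_neg (not_le.2 h), if_neg (not_le.2 h2)]
        calc f a ≤ 2 * σ₁ * a := hflin a ha (le_refl a)
        _ ≤ 2 * σ₁ * ξ := by nlinarith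
  refine ⟨⟨?_, ?_⟩, fun ξ hξ => ⟨hFb ξ hξ, hfb ξ hξ⟩⟩
  · -- upper bound
    rintro y ⟨ξ, hξ, rfl⟩
    have h2 : (0:ℝ) < ξ ^ 2 := by positivity
    rw [div_le_iff₀ h2]
    calc Ftil ξ ≤ σ₁ * ξ ^ 2 := hFb ξ hξ.le
    _ = σ₁ * ξ ^ 2 := rfl
  · -- least upper bound
    intro b hb
    refine le_of_tendsto hσ₁ ?_
    filter_upwards [Ioc_mem_nhdsGT_of_mem ⟨le_refl (0:ℝ), ha⟩] with ξ hξ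
    have : F ξ / ξ ^ 2 = Ftil ξ / ξ ^ 2 := by
      rw [hFtilF ξ ⟨hξ.1.le, hξ.2⟩]
    rw [this]
    exact hb ⟨ξ, hξ.1, rfl⟩
end

section
/- Let X and Y be real Hilbert spaces and T : X → Y a compact bounded linear operator with T ≠ 0. Then there exists φ ∈ X with ‖Tφ‖_Y = 1 such that ‖φ‖_X² = inf{‖u‖_X² : u ∈ X, ‖Tu‖_Y = 1}, and φ satisfies the Euler equation ⟨φ, v⟩_X = ‖φ‖_X² · ⟨Tφ, Tv⟩_Y for every v ∈ X. -/
open Filter Topology Metric ContinuousLinearMap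

set_option maxHeartbeats 1000000 in
/-- The minimization problem (M): for a nonzero compact operator `T` between real Hilbert
spaces, the minimum of `‖u‖²` over `{u : ‖T u‖ = 1}` is attained at some `φ`, which
satisfies the Euler equation `⟪φ, v⟫ = ‖φ‖² ⟪Tφ, Tv⟫` for all `v`. -/
theorem stmt_9
    {X Y : Type*} [NormedAddCommGroup X] [InnerProductSpace ℝ X] [CompleteSpace X]
    [NormedAddCommGroup Y] [InnerProductSpace ℝ Y] [CompleteSpace Y]
    (T : X →L[ℝ] Y) (hTcpt : IsCompactOperator (⇑T)) (hT0 : T ≠ 0) :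
    ∃ φ : X, ‖T φ‖ = 1 ∧
      IsLeast {c : ℝ | ∃ u : X, ‖T u‖ = 1 ∧ c = ‖u‖ ^ 2} (‖φ‖ ^ 2) ∧
      ∀ v : X, (inner ℝ φ v : ℝ) = ‖φ‖ ^ 2 * (inner ℝ (T φ) (T v) : ℝ) := by
  classical
  set A : Y →L[ℝ] X := ContinuousLinearMap.adjoint T with hA
  set l : ℝ := ‖T‖ with hl
  have hl0 : 0 < l := norm_pos_iff.mpr hT0
  have hAnorm : ‖A‖ = l := LinearIsometryEquiv.norm_map ContinuousLinearMap.adjoint T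
  -- maximizing sequence for ‖T u‖ on the unit ball
  have hseq : ∀ n : ℕ, ∃ u : X, ‖u‖ < 1 ∧ l - 1 / (n + 1) < ‖T u‖ := by
    intro n
    refine T.exists_lt_apply_of_lt_opNorm ?_
    have : (0 : ℝ) < 1 / (n + 1) := by positivity
    linarith
  choose u hu1 hu2 using hseq
  have huball : ∀ n, ‖T (u n)‖ ≤ l := by
    intro n
    calc ‖T (u n)‖ ≤ ‖T‖ * ‖u n‖ := T.le_opNorm _
    _ ≤ l := by nlinarith [(hu1 n).le, norm_nonneg (u n), T.opNorm_nonneg]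
  have hTu_lim : Tendsto (fun n => ‖T (u n)‖) atTop (𝓝 l) := by
    have h1 : Tendsto (fun n : ℕ => l - 1 / (n + 1)) atTop (𝓝 (l - 0)) :=
      tendsto_const_nhds.sub tendsto_one_div_add_atTop_nhds_zero_nat
    rw [sub_zero] at h1
    exact tendsto_of_tendsto_of_tendsto_of_le_of_le h1 tendsto_const_nhds
      (fun n => (hu2 n).le) huball
  -- A (T uₙ) - l² • uₙ → 0
  have hkey : Tendsto (fun n => A (T (u n)) - l ^ 2 • u n) atTop (𝓝 0) := by
    rw [tendsto_zero_iff_norm_tendsto_zero]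
    have hbd : ∀ n, ‖A (T (u n)) - l ^ 2 • u n‖ ^ 2
        ≤ 2 * l ^ 4 - 2 * l ^ 2 * ‖T (u n)‖ ^ 2 := by
      intro n
      have hw : ‖A (T (u n))‖ ≤ l ^ 2 := by
        calc ‖A (T (u n))‖ ≤ ‖A‖ * ‖T (u n)‖ := A.le_opNorm _
        _ ≤ l ^ 2 := by rw [hAnorm]; nlinarith [huball n, hl0.le]
      have hinner : (inner ℝ (A (T (u n))) (l ^ 2 • u n) : ℝ) = l ^ 2 * ‖T (u n)‖ ^ 2 := by
        rw [real_inner_smul_right, ContinuousLinearMap.adjoint_inner_left,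
          real_inner_self_eq_norm_sq]
      rw [norm_sub_sq_real, hinner, norm_smul]
      have hun : ‖u n‖ ≤ 1 := (hu1 n).le
      have h0 : (0:ℝ) ≤ ‖u n‖ := norm_nonneg _
      have : ‖(l ^ 2 : ℝ)‖ = l ^ 2 := by
        rw [Real.norm_eq_abs, abs_of_nonneg (by positivity)]
      rw [this]
      have hw2 : ‖A (T (u n))‖ ^ 2 ≤ l ^ 4 := by
        nlinarith [norm_nonneg (A (T (u n)))]
      have hu2' : (l ^ 2 * ‖u n‖) ^ 2 ≤ l ^ 4 := by
        have h1 : ‖u n‖ ^ 2 ≤ 1 := by nlinarith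
        calc (l ^ 2 * ‖u n‖) ^ 2 = l ^ 4 * ‖u n‖ ^ 2 := by ring
        _ ≤ l ^ 4 * 1 := by
            apply mul_le_mul_of_nonneg_left h1 (by positivity)
        _ = l ^ 4 := mul_one _
      linarith
    have hsq : Tendsto (fun n => ‖A (T (u n)) - l ^ 2 • u n‖ ^ 2) atTop (𝓝 0) := by
      have h2 : Tendsto (fun n => ‖T (u n)‖ ^ 2) atTop (𝓝 (l ^ 2)) := by
        simpa [pow_two] using hTu_lim.mul hTu_lim
      have hrhs : Tendsto (fun n => 2 * l ^ 4 - 2 * l ^ 2 * ‖T (u n)‖ ^ 2) atTop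
          (𝓝 (2 * l ^ 4 - 2 * l ^ 2 * l ^ 2)) :=
        tendsto_const_nhds.sub (h2.const_mul (2 * l ^ 2))
      have h0 : (2 * l ^ 4 - 2 * l ^ 2 * l ^ 2 : ℝ) = 0 := by ring
      rw [h0] at hrhs
      exact squeeze_zero (fun n => sq_nonneg _) hbd hrhs
    have := hsq.sqrt
    rw [Real.sqrt_zero] at this
    exact this.congr fun n => Real.sqrt_sq (norm_nonneg _)
  -- compactness: extract convergent subsequence of T uₙ
  obtain ⟨K, hK, hKsub⟩ :=
    hTcpt.image_closedBall_subset_compact (𝕜₁ := ℝ) (f := (T : X →ₗ[ℝ] Y)) 1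
  have hmem : ∀ n, T (u n) ∈ K := fun n =>
    hKsub ⟨u n, by simpa using (hu1 n).le, rfl⟩
  obtain ⟨y, _, g, hg, hconv⟩ := hK.tendsto_subseq hmem
  -- the subsequence u ∘ g converges to φ₀
  have hl2 : (l ^ 2 : ℝ) ≠ 0 := by positivity
  set φ₀ : X := (l ^ 2)⁻¹ • A y with hφ₀
  have hAconv : Tendsto (fun k => A (T (u (g k)))) atTop (𝓝 (A y)) :=
    (A.continuous.tendsto y).comp hconv
  have huconv : Tendsto (fun k => u (g k)) atTop (𝓝 φ₀) := by
    have h1 : Tendsto (fun k => (l ^ 2 : ℝ) • u (g k)) atTop (𝓝 (A y)) := by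
      have h2 : Tendsto (fun k => A (T (u (g k))) - (A (T (u (g k))) - l ^ 2 • u (g k)))
          atTop (𝓝 (A y - 0)) := hAconv.sub (hkey.comp hg.tendsto_atTop)
      rw [sub_zero] at h2
      exact h2.congr fun k => by abel
    have := h1.const_smul ((l ^ 2 : ℝ)⁻¹)
    rw [hφ₀]
    exact this.congr fun k => by rw [smul_smul, inv_mul_cancel₀ hl2, one_smul]
  have hTφ₀ : T φ₀ = y :=
    tendsto_nhds_unique ((T.continuous.tendsto φ₀).comp huconv) hconv
  have hynorm : ‖y‖ = l :=
    tendsto_nhds_unique ((continuous_norm.tendsto y).comp hconv)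
      (hTu_lim.comp hg.tendsto_atTop)
  have hAy : A y = l ^ 2 • φ₀ := by
    rw [hφ₀, smul_smul, mul_inv_cancel₀ hl2, one_smul]
  -- the normalized minimizer
  set φ : X := l⁻¹ • φ₀ with hφ
  have hTφnorm : ‖T φ‖ = 1 := by
    rw [hφ, map_smul, norm_smul, hTφ₀, hynorm, Real.norm_eq_abs,
      abs_of_nonneg (by positivity), inv_mul_cancel₀ hl0.ne']
  have hSφ : A (T φ) = l ^ 2 • φ := by
    rw [hφ, map_smul, map_smul, hTφ₀, hAy, smul_comm]
  have hinner_eq : ∀ v : X, (inner ℝ (T φ) (T v) : ℝ) = l ^ 2 * (inner ℝ φ v : ℝ) := by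
    intro v
    rw [← ContinuousLinearMap.adjoint_inner_left, hSφ, real_inner_smul_left]
  have hφnorm : ‖φ‖ ^ 2 = (l ^ 2)⁻¹ := by
    have h1 : (inner ℝ (T φ) (T φ) : ℝ) = l ^ 2 * (inner ℝ φ φ : ℝ) := hinner_eq φ
    rw [real_inner_self_eq_norm_sq, real_inner_self_eq_norm_sq, hTφnorm] at h1
    field_simp
    linarith [h1]
  refine ⟨φ, hTφnorm, ⟨⟨φ, hTφnorm, rfl⟩, ?_⟩, ?_⟩
  · rintro c ⟨v, hv, rfl⟩
    have h1 : (1 : ℝ) ≤ l * ‖v‖ := by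
      calc (1 : ℝ) = ‖T v‖ := hv.symm
      _ ≤ ‖T‖ * ‖v‖ := T.le_opNorm v
    rw [hφnorm]
    rw [inv_le_iff_one_le_mul₀ (by positivity)]
    nlinarith [norm_nonneg v]
  · intro v
    rw [hinner_eq v, hφnorm]
    field_simp
end
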